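/- Fix a real number q ≥ 1. Then the overall normalized ℓq calibration error is at most the weighted average of the group errors: E^{(q)} / T ≤ Σ_{j : T^j > 0} (T^j / T) · (E_j^{(q)} / T^j). Consequently, if for each group j with T^j > 0 one has E_j^{(q)} / T^j ≤ R_j + ε with R_j ≥ 0, ε ≥ 0, then E^{(q)} / T ≤ Σ_{j : T^j > 0} (T^j / T) · R_j + ε. -/

import Mathlib

open Finset
open scoped Classical

/-- Number of times `i/N` was predicted among the time steps in `S`. -/
noncomputable def numPred (T N : ℕ) (p : Fin T → ℝ) (S : Finset (Fin T)) (i : ℕ) : ℕ :=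
  (S.filter (fun t => p t = (i : ℝ) / N)).card

/-- Empirical frequency `ρ(i)` of positive outcomes among the time steps in `S` where
`i/N` was predicted (defined to be `i/N` when there are no such time steps). -/
noncomputable def empFreq (T N : ℕ) (p o : Fin T → ℝ) (S : Finset (Fin T)) (i : ℕ) : ℝ :=
  if 0 < numPred T N p S i then
    (∑ t ∈ S.filter (fun t => p t = (i : ℝ) / N), o t) / (numPred T N p S i : ℝ)
  else (i : ℝ) / N

/-- Unnormalized ℓq calibration error over the time steps in `S`:
`E^{(q)} = Σ_{i=0}^N T_i · |ρ(i) − i/N|^q`. -/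
noncomputable def calErrLq (T N : ℕ) (q : ℝ) (p o : Fin T → ℝ) (S : Finset (Fin T)) : ℝ :=
  ∑ i ∈ Finset.range (N + 1),
    (numPred T N p S i : ℝ) * |empFreq T N p o S i - (i : ℝ) / N| ^ q

lemma core {T N M : ℕ} (q : ℝ) (hq : 1 ≤ q) (p o : Fin T → ℝ) (J : Fin T → Fin M) (i : ℕ) :
    (numPred T N p univ i : ℝ) * |empFreq T N p o univ i - (i : ℝ) / N| ^ q
      ≤ ∑ j : Fin M, (numPred T N p (univ.filter (fun t => J t = j)) i : ℝ) *
          |empFreq T N p o (univ.filter (fun t => J t = j)) i - (i : ℝ) / N| ^ q := by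
  set c : ℝ := (i : ℝ) / N with hc
  set Ti : ℕ := numPred T N p univ i with hTi
  set Tj : Fin M → ℕ := fun j => numPred T N p (univ.filter (fun t => J t = j)) i with hTj
  have hfib : ∀ j, (univ.filter (fun t => J t = j)).filter (fun t => p t = c)
      = (univ.filter (fun t => p t = c)).filter (fun t => J t = j) := by
    intro j; rw [filter_comm]
  have hsum : Ti = ∑ j, Tj j := by
    simp only [hTi, hTj, numPred, hfib]
    rw [card_eq_sum_card_fiberwise (fun x _ => mem_univ (J x))]
    exact Finset.sum_congr rfl fun j _ => by rw [filter_comm]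
  have hosum : ∑ t ∈ univ.filter (fun t => p t = c), o t
      = ∑ j, ∑ t ∈ (univ.filter (fun t => J t = j)).filter (fun t => p t = c), o t := by
    simp only [hfib]
    exact (Finset.sum_fiberwise (univ.filter (fun t => p t = c)) J o).symm
  rcases Nat.eq_zero_or_pos Ti with h0 | hpos
  · rw [h0]
    simp only [Nat.cast_zero, zero_mul]
    exact Finset.sum_nonneg fun j _ => mul_nonneg (Nat.cast_nonneg _)
      (Real.rpow_nonneg (abs_nonneg _) q)
  · have hTipos : (0 : ℝ) < Ti := by exact_mod_cast hpos
    set w : Fin M → ℝ := fun j => (Tj j : ℝ) / Ti with hw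
    set z : Fin M → ℝ := fun j => |empFreq T N p o (univ.filter (fun t => J t = j)) i - c| with hz
    have hwnn : ∀ j ∈ (univ : Finset (Fin M)), 0 ≤ w j := fun j _ =>
      div_nonneg (Nat.cast_nonneg _) hTipos.le
    have hw1 : ∑ j, w j = 1 := by
      rw [hw]
      rw [← Finset.sum_div]
      rw [show ∑ j, (Tj j : ℝ) = (Ti : ℝ) by rw [hsum]; push_cast; ring]
      exact div_self hTipos.ne'
    have hznn : ∀ j ∈ (univ : Finset (Fin M)), 0 ≤ z j := fun j _ => abs_nonneg _
    -- key : ρ - c = ∑ j, w j * (ρ^j - c)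
    have hterm : ∀ j, w j * (empFreq T N p o (univ.filter (fun t => J t = j)) i - c)
        = ((∑ t ∈ (univ.filter (fun t => J t = j)).filter (fun t => p t = c), o t)
            - (Tj j : ℝ) * c) / Ti := by
      intro j
      rcases Nat.eq_zero_or_pos (Tj j) with h | h
      · have he : (univ.filter (fun t => J t = j)).filter (fun t => p t = c) = ∅ := by
          rw [← Finset.card_eq_zero]; exact h
        simp [hw, empFreq, numPred, ← hTj, h, he, hc]
        rw [← hc, he]; simp
      · have hTjpos : (0 : ℝ) < Tj j := by exact_mod_cast h
        rw [hw]
        rw [show empFreq T N p o (univ.filter (fun t => J t = j)) i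
            = (∑ t ∈ (univ.filter (fun t => J t = j)).filter (fun t => p t = c), o t) / (Tj j)
            from by simp [empFreq, numPred, ← hTj, h, hc, Finset.card_pos.mp h]; rfl]
        field_simp
    have hkey : empFreq T N p o univ i - c = ∑ j, w j *
        (empFreq T N p o (univ.filter (fun t => J t = j)) i - c) := by
      rw [show empFreq T N p o univ i
          = (∑ t ∈ univ.filter (fun t => p t = c), o t) / Ti from by
            simp [empFreq, numPred, ← hTi, hpos, hc, Finset.card_pos.mp hpos]; rfl]
      simp only [hterm]
      rw [← Finset.sum_div, Finset.sum_sub_distrib, ← Finset.sum_mul]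
      rw [show ∑ j, (Tj j : ℝ) = (Ti : ℝ) by rw [hsum]; push_cast; ring]
      rw [← hosum]
      field_simp
    have habs : |empFreq T N p o univ i - c| ≤ ∑ j, w j * z j := by
      rw [hkey]
      refine (Finset.abs_sum_le_sum_abs _ _).trans ?_
      refine Finset.sum_le_sum fun j _ => ?_
      rw [abs_mul, abs_of_nonneg (hwnn j (mem_univ j))]
    have hrpow : |empFreq T N p o univ i - c| ^ q ≤ ∑ j, w j * z j ^ q :=
      le_trans (Real.rpow_le_rpow (abs_nonneg _) habs (le_trans zero_le_one hq))
        (Real.rpow_arith_mean_le_arith_mean_rpow univ w z hwnn hw1 hznn hq)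
    calc (Ti : ℝ) * |empFreq T N p o univ i - c| ^ q
        ≤ (Ti : ℝ) * ∑ j, w j * z j ^ q := by
          exact mul_le_mul_of_nonneg_left hrpow hTipos.le
      _ = ∑ j, (Tj j : ℝ) * z j ^ q := by
          rw [Finset.mul_sum]
          refine Finset.sum_congr rfl fun j _ => ?_
          rw [hw]; field_simp

lemma calErrLq_empty (T N : ℕ) (q : ℝ) (p o : Fin T → ℝ) :
    calErrLq T N q p o ∅ = 0 := by
  simp [calErrLq, numPred]

lemma calErrLq_nonneg (T N : ℕ) (q : ℝ) (p o : Fin T → ℝ) (S : Finset (Fin T)) :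
    0 ≤ calErrLq T N q p o S :=
  Finset.sum_nonneg fun i _ => mul_nonneg (Nat.cast_nonneg _) (Real.rpow_nonneg (abs_nonneg _) q)


/-- appendix ℓp version of Lemma 1, via Jensen's inequality. -/
theorem calErrLq_le_weighted_group_errors
    (T N M : ℕ) (hT : 1 ≤ T) (hN : 1 ≤ N) (hM : 1 ≤ M)
    (q : ℝ) (hq : 1 ≤ q)
    (p o : Fin T → ℝ)
    (hp : ∀ t, ∃ i : Fin (N + 1), p t = (i : ℝ) / N)
    (ho : ∀ t, o t = 0 ∨ o t = 1)
    (J : Fin T → Fin M) :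
    (calErrLq T N q p o univ) / (T : ℝ)
      ≤ ∑ j ∈ univ.filter
            (fun j : Fin M => 0 < (univ.filter (fun t => J t = j)).card),
          ((univ.filter (fun t => J t = j)).card : ℝ) / (T : ℝ) *
            (calErrLq T N q p o (univ.filter (fun t => J t = j)) /
              ((univ.filter (fun t => J t = j)).card : ℝ)) ∧
    ∀ (R : Fin M → ℝ) (ε : ℝ), (∀ j, 0 ≤ R j) → 0 ≤ ε →
      (∀ j : Fin M, 0 < (univ.filter (fun t => J t = j)).card →
        calErrLq T N q p o (univ.filter (fun t => J t = j)) /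
          ((univ.filter (fun t => J t = j)).card : ℝ) ≤ R j + ε) →
      (calErrLq T N q p o univ) / (T : ℝ)
        ≤ (∑ j ∈ univ.filter
              (fun j : Fin M => 0 < (univ.filter (fun t => J t = j)).card),
            ((univ.filter (fun t => J t = j)).card : ℝ) / (T : ℝ) * R j) + ε := by
  have hT0 : (0 : ℝ) < T := by exact_mod_cast hT
  set G : Fin M → Finset (Fin T) := fun j => univ.filter (fun t => J t = j) with hG
  set F : Finset (Fin M) := univ.filter (fun j => 0 < (G j).card) with hF
  have hGzero : ∀ j ∉ F, G j = ∅ := by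
    intro j hj
    rw [hF] at hj
    simp only [mem_filter, mem_univ, true_and, not_lt, Nat.le_zero] at hj
    exact Finset.card_eq_zero.mp hj
  have hstep1 : calErrLq T N q p o univ ≤ ∑ j, calErrLq T N q p o (G j) := by
    rw [show ∑ j, calErrLq T N q p o (G j)
        = ∑ i ∈ Finset.range (N + 1), ∑ j, (numPred T N p (G j) i : ℝ) *
            |empFreq T N p o (G j) i - (i : ℝ) / N| ^ q from Finset.sum_comm]
    exact Finset.sum_le_sum fun i _ => core q hq p o J i
  have hsumF : ∑ j ∈ F, calErrLq T N q p o (G j) = ∑ j, calErrLq T N q p o (G j) := by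
    refine Finset.sum_subset (Finset.filter_subset _ _) fun j _ hj => ?_
    rw [hGzero j hj, calErrLq_empty]
  have part1 : (calErrLq T N q p o univ) / (T : ℝ)
      ≤ ∑ j ∈ F, ((G j).card : ℝ) / (T : ℝ) *
          (calErrLq T N q p o (G j) / ((G j).card : ℝ)) := by
    have heq : ∀ j ∈ F, ((G j).card : ℝ) / (T : ℝ) *
        (calErrLq T N q p o (G j) / ((G j).card : ℝ))
        = calErrLq T N q p o (G j) / (T : ℝ) := by
      intro j hj
      rw [hF] at hj
      simp only [mem_filter, mem_univ, true_and] at hj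
      have : ((G j).card : ℝ) ≠ 0 := by positivity
      field_simp
    rw [Finset.sum_congr rfl heq, ← Finset.sum_div, hsumF]
    exact div_le_div_of_nonneg_right hstep1 hT0.le
  refine ⟨part1, fun R ε hR hε hbound => ?_⟩
  have hcards : ∑ j ∈ F, ((G j).card : ℝ) ≤ (T : ℝ) := by
    have h1 : ∑ j, (G j).card = T := by
      have := Finset.card_eq_sum_card_fiberwise (f := J) (s := (univ : Finset (Fin T)))
        (t := (univ : Finset (Fin M))) (fun x _ => mem_univ (J x))
      simpa [hG] using this.symm
    calc ∑ j ∈ F, ((G j).card : ℝ) ≤ ∑ j, ((G j).card : ℝ) :=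
          Finset.sum_le_sum_of_subset_of_nonneg (Finset.filter_subset _ _)
            (fun j _ _ => Nat.cast_nonneg _)
      _ = (T : ℝ) := by rw [← Nat.cast_sum, h1]
  calc (calErrLq T N q p o univ) / (T : ℝ)
      ≤ ∑ j ∈ F, ((G j).card : ℝ) / (T : ℝ) *
          (calErrLq T N q p o (G j) / ((G j).card : ℝ)) := part1
    _ ≤ ∑ j ∈ F, ((G j).card : ℝ) / (T : ℝ) * (R j + ε) := by
        refine Finset.sum_le_sum fun j hj => ?_
        have hjpos : 0 < (G j).card := by
          rw [hF] at hj; simpa using hj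
        exact mul_le_mul_of_nonneg_left (hbound j hjpos)
          (div_nonneg (Nat.cast_nonneg _) hT0.le)
    _ = (∑ j ∈ F, ((G j).card : ℝ) / (T : ℝ) * R j)
        + (∑ j ∈ F, ((G j).card : ℝ) / (T : ℝ)) * ε := by
        rw [Finset.sum_mul, ← Finset.sum_add_distrib]
        exact Finset.sum_congr rfl fun j _ => by ring
    _ ≤ (∑ j ∈ F, ((G j).card : ℝ) / (T : ℝ) * R j) + ε := by
        refine add_le_add le_rfl ?_
        have : ∑ j ∈ F, ((G j).card : ℝ) / (T : ℝ) ≤ 1 := by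
          rw [← Finset.sum_div]
          rw [div_le_one hT0]
          exact hcards
        calc (∑ j ∈ F, ((G j).card : ℝ) / (T : ℝ)) * ε ≤ 1 * ε :=
              mul_le_mul_of_nonneg_right this hε
          _ = ε := one_mul ε
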